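/- Let L be a modality on E. For every object X of E and every object p : E' ⟶ X of Over X, write η : E' ⟶ M for the underlying morphism of E of the unit map η_X(p) : p ⟶ L_X(p), where M is the domain of L_X(p). Then η is an L-connected morphism of E. -/

import Mathlib

open CategoryTheory CategoryTheory.Limits

universe v u

/-- A morphism `l` is uniquely left orthogonal to a morphism `r`. -/
def UniqueLift {C : Type*} [Category C] {A B X Y : C} (l : A ⟶ B) (r : X ⟶ Y) : Prop :=
  ∀ (u : A ⟶ X) (v : B ⟶ Y), u ≫ r = l ≫ v → ∃! d : B ⟶ X, l ≫ d = u ∧ d ≫ r = v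

variable (E : Type u) [Category.{v} E] [HasPullbacks E]

/-- A reflective subfibration on a category `E` with pullbacks: a pullback-stable
assignment of a reflective (full) subcategory `D X ⊆ Over X` for every `X : E`,
with reflector `Lf X` (the composite of the localization onto `D X` and the
inclusion) and unit `η X`, such that pullback functors preserve the subcategories
and the canonical comparison map `L_X (f* p) ⟶ f* (L_Y p)` is an isomorphism;
the latter is expressed by requiring that the pullback of a unit map is an
`L_X`-equivalence, which is equivalent to invertibility of the comparison map. -/
structure ReflectiveSubfibration where
  /-- membership in the reflective subcategory `D X ⊆ Over X` -/
  loc : ∀ {X : E}, Over X → Prop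
  /-- the localization functor `L_X : Over X ⥤ Over X` -/
  Lf : ∀ X : E, Over X ⥤ Over X
  /-- the unit of the localization -/
  η : ∀ X : E, 𝟭 (Over X) ⟶ Lf X
  loc_obj : ∀ (X : E) (p : Over X), loc ((Lf X).obj p)
  reflect : ∀ (X : E) (p d : Over X), loc d → ∀ g : p ⟶ d,
      ∃! h : (Lf X).obj p ⟶ d, (η X).app p ≫ h = g
  loc_pullback : ∀ {X Y : E} (f : X ⟶ Y) (p : Over Y),
      loc p → loc ((Over.pullback f).obj p)
  comparison_isIso : ∀ {X Y : E} (f : X ⟶ Y) (p : Over Y),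
      IsIso ((Lf X).map ((Over.pullback f).map ((η Y).app p)))

variable {E}

namespace ReflectiveSubfibration

variable (rsf : ReflectiveSubfibration E)

/-- A morphism `p : A ⟶ X` of `E` is `L`-local if it lies in `D X` as an object of `Over X`. -/
def LocalMap {A X : E} (p : A ⟶ X) : Prop := rsf.loc (Over.mk p)

/-- A morphism of `Over X` is an `L_X`-equivalence if `L_X` inverts it. -/
def Lequiv {X : E} {p q : Over X} (α : p ⟶ q) : Prop := IsIso ((rsf.Lf X).map α)

/-- A morphism `f : A ⟶ X` is `L`-connected if `L_X f` is a terminal object of `Over X`,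
i.e. its structure morphism to `X` is an isomorphism. -/
def Connected {A X : E} (f : A ⟶ X) : Prop := IsIso ((rsf.Lf X).obj (Over.mk f)).hom

/-- A morphism is `L`-separated if its diagonal is `L`-local. -/
def Separated {A X : E} (p : A ⟶ X) : Prop := rsf.LocalMap (pullback.diagonal p)

end ReflectiveSubfibration

/-- For a modality, the underlying morphism of every unit map `η_X p : p ⟶ L_X p`
is `L`-connected. -/
theorem unit_connected (rsf : ReflectiveSubfibration E)
    (hmod : ∀ {X Y Z : E} (f : X ⟶ Y) (g : Y ⟶ Z),
      rsf.LocalMap f → rsf.LocalMap g → rsf.LocalMap (f ≫ g))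
    {E' X : E} (p : E' ⟶ X) :
    rsf.Connected ((rsf.η X).app (Over.mk p)).left := by

  -- Notation
  set P := Over.mk p with hP
  set Lp := (rsf.Lf X).obj P with hLp
  set ηp := (rsf.η X).app P with hηp
  set A := Over.mk ηp.left with hA
  set Q := (rsf.Lf (Lp.left)).obj A with hQ
  set u := (rsf.η (Lp.left)).app A with hu
  -- basic equations
  have hul : u.left ≫ Q.hom = ηp.left := Over.w u
  have hηw : ηp.left ≫ Lp.hom = p := Over.w ηp
  -- Q.hom ≫ Lp.hom is local
  have hlocQ : rsf.loc Q := rsf.loc_obj _ _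
  have hlocLp : rsf.loc Lp := rsf.loc_obj _ _
  have hcomp : rsf.loc (Over.mk (Q.hom ≫ Lp.hom)) :=
    hmod Q.hom Lp.hom hlocQ hlocLp
  -- the map P ⟶ Over.mk (Q.hom ≫ Lp.hom)
  have hg : u.left ≫ Q.hom ≫ Lp.hom = P.hom := by
    rw [← Category.assoc, hul]; exact hηw
  let g : P ⟶ Over.mk (Q.hom ≫ Lp.hom) := Over.homMk u.left hg
  obtain ⟨h, hcom, -⟩ := rsf.reflect X P (Over.mk (Q.hom ≫ Lp.hom)) hcomp g
  have hηh : ηp.left ≫ h.left = u.left := congrArg CommaMorphism.left hcom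
  have hw : h.left ≫ Q.hom ≫ Lp.hom = Lp.hom := Over.w h
  -- Step 1 : h.left ≫ Q.hom = 𝟙
  obtain ⟨k, -, kuniq⟩ := rsf.reflect X P Lp hlocLp ηp
  have hws : (h.left ≫ Q.hom) ≫ Lp.hom = Lp.hom := by
    rw [Category.assoc]; exact hw
  have e1 : Over.homMk (h.left ≫ Q.hom) hws = (𝟙 Lp : Lp ⟶ Lp) := by
    rw [kuniq (Over.homMk (h.left ≫ Q.hom) hws), kuniq (𝟙 Lp)]
    · exact Category.comp_id _
    · ext
      simp only [Over.comp_left, Over.homMk_left]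
      rw [← Category.assoc, hηh, hul]
  have s1 : h.left ≫ Q.hom = 𝟙 Lp.left := congrArg CommaMorphism.left e1
  -- Step 2 : Q.hom ≫ h.left = 𝟙
  obtain ⟨m, -, muniq⟩ := rsf.reflect Lp.left A Q hlocQ u
  have hws2 : (Q.hom ≫ h.left) ≫ Q.hom = Q.hom := by
    rw [Category.assoc, s1]; simp
  have e2 : Over.homMk (Q.hom ≫ h.left) hws2 = (𝟙 Q : Q ⟶ Q) := by
    rw [muniq (Over.homMk (Q.hom ≫ h.left) hws2), muniq (𝟙 Q)]
    · exact Category.comp_id _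
    · ext
      simp only [Over.comp_left, Over.homMk_left]
      rw [← Category.assoc, hul, hηh]
  have s2 : Q.hom ≫ h.left = 𝟙 Q.left := congrArg CommaMorphism.left e2
  exact ⟨h.left, s2, s1⟩
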